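/- Let A, B, C, D be finite-valued random variables. If I(A; D | B, C) = 0 and I(A; C) ≥ I(A; C | B), then I(A; (C, D)) ≥ I(A; (C, D) | B). -/

import Mathlib

open scoped BigOperators

noncomputable section

/-- Probability that the random variable `X` takes the value `a`,
with respect to the probability mass function `p` on the finite sample space `Ω`. -/
def prob {Ω : Type*} [Fintype Ω] {α : Type*} [DecidableEq α]
    (p : Ω → ℝ) (X : Ω → α) (a : α) : ℝ :=
  ∑ ω, if X ω = a then p ω else 0

/-- Shannon entropy (base 2) of the random variable `X`. -/
def ent {Ω : Type*} [Fintype Ω] {α : Type*} [Fintype α] [DecidableEq α]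
    (p : Ω → ℝ) (X : Ω → α) : ℝ :=
  -∑ a, prob p X a * Real.logb 2 (prob p X a)

/-- Conditional entropy `H(X|Y)`. -/
def condEnt {Ω : Type*} [Fintype Ω] {α β : Type*} [Fintype α] [DecidableEq α]
    [Fintype β] [DecidableEq β] (p : Ω → ℝ) (X : Ω → α) (Y : Ω → β) : ℝ :=
  ent p (fun ω => (X ω, Y ω)) - ent p Y

/-- Mutual information `I(X;Y)`. -/
def mi {Ω : Type*} [Fintype Ω] {α β : Type*} [Fintype α] [DecidableEq α]
    [Fintype β] [DecidableEq β] (p : Ω → ℝ) (X : Ω → α) (Y : Ω → β) : ℝ :=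
  ent p X + ent p Y - ent p (fun ω => (X ω, Y ω))

/-- Conditional mutual information `I(X;Y|Z)`. -/
def cmi {Ω : Type*} [Fintype Ω] {α β γ : Type*} [Fintype α] [DecidableEq α]
    [Fintype β] [DecidableEq β] [Fintype γ] [DecidableEq γ]
    (p : Ω → ℝ) (X : Ω → α) (Y : Ω → β) (Z : Ω → γ) : ℝ :=
  ent p (fun ω => (X ω, Z ω)) + ent p (fun ω => (Y ω, Z ω))
    - ent p (fun ω => (X ω, Y ω, Z ω)) - ent p Z

set_option linter.unusedSectionVars false
set_option maxHeartbeats 1000000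

section Helpers

variable {Ω : Type*} [Fintype Ω] {α β γ : Type*} [Fintype α] [DecidableEq α]
    [Fintype β] [DecidableEq β] [Fintype γ] [DecidableEq γ] (p : Ω → ℝ)

lemma prob_nonneg (hp : ∀ ω, 0 ≤ p ω) (X : Ω → α) (a : α) : 0 ≤ prob p X a := by
  refine Finset.sum_nonneg fun ω _ => ?_
  split
  · exact hp ω
  · exact le_refl 0

lemma sum_prob (X : Ω → α) : ∑ a, prob p X a = ∑ ω, p ω := by
  unfold prob; rw [Finset.sum_comm]; simp

lemma prob_snd' (X : Ω → α) (Y : Ω → β) (y : β) :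
    prob p Y y = ∑ x, prob p (fun ω => (X ω, Y ω)) (x, y) := by
  unfold prob; rw [Finset.sum_comm]
  refine Finset.sum_congr rfl fun ω _ => ?_
  by_cases h : Y ω = y <;> simp [Prod.ext_iff, h]

lemma prob_mid (X : Ω → α) (Y : Ω → β) (Z : Ω → γ) (x : α) (z : γ) :
    prob p (fun ω => (X ω, Z ω)) (x, z) = ∑ y, prob p (fun ω => (X ω, Y ω, Z ω)) (x, y, z) := by
  unfold prob; rw [Finset.sum_comm]
  refine Finset.sum_congr rfl fun ω _ => ?_
  by_cases h1 : X ω = x <;> by_cases h2 : Z ω = z <;> simp [Prod.ext_iff, h1, h2]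

lemma ent_comp {β' : Type*} [Fintype β'] [DecidableEq β'] (f : α → β') (hf : Function.Injective f)
    (X : Ω → α) : ent p (fun ω => f (X ω)) = ent p X := by
  unfold ent
  congr 1
  have h0 : ∀ b ∈ Finset.univ, b ∉ Finset.univ.image f →
      prob p (fun ω => f (X ω)) b * Real.logb 2 (prob p (fun ω => f (X ω)) b) = 0 := by
    intro b _ hb
    have : prob p (fun ω => f (X ω)) b = 0 := by
      refine Finset.sum_eq_zero fun ω _ => ?_
      have : f (X ω) ≠ b := fun h => hb (Finset.mem_image.2 ⟨X ω, Finset.mem_univ _, h⟩)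
      simp [this]
    simp [this]
  rw [← Finset.sum_subset (Finset.subset_univ _) h0,
    Finset.sum_image (fun a _ a' _ h => hf h)]
  refine Finset.sum_congr rfl fun a _ => ?_
  have : prob p (fun ω => f (X ω)) (f a) = prob p X a := by
    unfold prob
    refine Finset.sum_congr rfl fun ω _ => ?_
    simp [hf.eq_iff]
  rw [this]


lemma cmi_nonneg (hp : ∀ ω, 0 ≤ p ω) (hsum : ∑ ω, p ω = 1)
    (X : Ω → α) (Y : Ω → β) (Z : Ω → γ) : 0 ≤ cmi p X Y Z := by
  have hlog : (0:ℝ) < Real.log 2 := Real.log_pos one_lt_two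
  -- abbreviations (as plain functions for readability in this proof)
  set r : α × β × γ → ℝ := prob p (fun ω => (X ω, Y ω, Z ω)) with hrdef
  set u : α × γ → ℝ := prob p (fun ω => (X ω, Z ω)) with hudef
  set v : β × γ → ℝ := prob p (fun ω => (Y ω, Z ω)) with hvdef
  set w : γ → ℝ := prob p Z with hwdef
  have hr0 : ∀ t, 0 ≤ r t := fun t => prob_nonneg p hp _ t
  have hu0 : ∀ q, 0 ≤ u q := fun q => prob_nonneg p hp _ q
  have hv0 : ∀ q, 0 ≤ v q := fun q => prob_nonneg p hp _ q
  have hw0 : ∀ z, 0 ≤ w z := fun z => prob_nonneg p hp _ z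
  have hrsum : ∑ t, r t = 1 := by rw [hrdef, sum_prob p _, hsum]
  have hxz : ∀ x z, u (x, z) = ∑ y, r (x, y, z) := fun x z => prob_mid p X Y Z x z
  have hyz : ∀ y z, v (y, z) = ∑ x, r (x, y, z) :=
    fun y z => prob_snd' p X (fun ω => (Y ω, Z ω)) (y, z)
  have hz1 : ∀ z, w z = ∑ x, u (x, z) := fun z => prob_snd' p X Z z
  have hz2 : ∀ z, w z = ∑ y, v (y, z) := fun z => prob_snd' p Y Z z
  have hru : ∀ x y z, r (x, y, z) ≤ u (x, z) := by
    intro x y z; rw [hxz]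
    exact Finset.single_le_sum (fun y' _ => hr0 (x, y', z)) (Finset.mem_univ y)
  have hrv : ∀ x y z, r (x, y, z) ≤ v (y, z) := by
    intro x y z; rw [hyz]
    exact Finset.single_le_sum (fun x' _ => hr0 (x', y, z)) (Finset.mem_univ x)
  have huw : ∀ x z, u (x, z) ≤ w z := by
    intro x z; rw [hz1]
    exact Finset.single_le_sum (fun x' _ => hu0 (x', z)) (Finset.mem_univ x)
  -- entropy identities
  have eA : ∑ t : α × β × γ, r t * Real.logb 2 (u (t.1, t.2.2))
      = ∑ q : α × γ, u q * Real.logb 2 (u q) := by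
    simp only [Fintype.sum_prod_type]
    refine Finset.sum_congr rfl fun x _ => ?_
    rw [Finset.sum_comm]
    refine Finset.sum_congr rfl fun z _ => ?_
    rw [← Finset.sum_mul, ← hxz]
  have eB : ∑ t : α × β × γ, r t * Real.logb 2 (v t.2)
      = ∑ q : β × γ, v q * Real.logb 2 (v q) := by
    simp only [Fintype.sum_prod_type]
    rw [Finset.sum_comm]
    refine Finset.sum_congr rfl fun y _ => ?_
    rw [Finset.sum_comm]
    refine Finset.sum_congr rfl fun z _ => ?_
    rw [← Finset.sum_mul, ← hyz]
  have eC : ∑ t : α × β × γ, r t * Real.logb 2 (w t.2.2)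
      = ∑ z, w z * Real.logb 2 (w z) := by
    simp only [Fintype.sum_prod_type]
    have step1 : ∀ x : α, ∑ y : β, ∑ z : γ, r (x, y, z) * Real.logb 2 (w z)
        = ∑ z : γ, ∑ y : β, r (x, y, z) * Real.logb 2 (w z) := fun x => Finset.sum_comm
    simp only [step1]
    rw [Finset.sum_comm]
    refine Finset.sum_congr rfl fun z _ => ?_
    have : ∀ x : α, ∑ y : β, r (x, y, z) * Real.logb 2 (w z)
        = u (x, z) * Real.logb 2 (w z) := by
      intro x; rw [← Finset.sum_mul, ← hxz]
    simp only [this]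
    rw [← Finset.sum_mul, ← hz1]
  -- rewrite cmi as a single sum
  have hcmi : cmi p X Y Z = ∑ t : α × β × γ,
      r t * (Real.logb 2 (r t) + Real.logb 2 (w t.2.2)
        - Real.logb 2 (u (t.1, t.2.2)) - Real.logb 2 (v t.2)) := by
    have comb : ∑ t : α × β × γ,
        r t * (Real.logb 2 (r t) + Real.logb 2 (w t.2.2)
          - Real.logb 2 (u (t.1, t.2.2)) - Real.logb 2 (v t.2))
        = ((∑ t, r t * Real.logb 2 (r t)) + ∑ t, r t * Real.logb 2 (w t.2.2))
          - (∑ t, r t * Real.logb 2 (u (t.1, t.2.2))) - ∑ t, r t * Real.logb 2 (v t.2) := by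
      rw [← Finset.sum_add_distrib, ← Finset.sum_sub_distrib, ← Finset.sum_sub_distrib]
      exact Finset.sum_congr rfl fun t _ => by ring
    unfold cmi ent
    rw [← hrdef, ← hudef, ← hvdef, ← hwdef, ← eA, ← eB, ← eC, comb]
    ring
  -- per-term lower bound
  set b : α × β × γ → ℝ := fun t =>
    if w t.2.2 = 0 then 0 else u (t.1, t.2.2) * v t.2 / w t.2.2 with hbdef
  have hb0 : ∀ t, 0 ≤ b t := by
    rintro ⟨x, y, z⟩
    simp only [hbdef]
    split
    · exact le_refl 0
    · exact div_nonneg (mul_nonneg (hu0 _) (hv0 _)) (hw0 z)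
  have key : ∀ t : α × β × γ, (r t - b t) / Real.log 2
      ≤ r t * (Real.logb 2 (r t) + Real.logb 2 (w t.2.2)
        - Real.logb 2 (u (t.1, t.2.2)) - Real.logb 2 (v t.2)) := by
    rintro ⟨x, y, z⟩
    rcases eq_or_lt_of_le (hr0 (x, y, z)) with h | h
    · rw [← h]
      simp only [zero_sub, zero_mul]
      apply div_nonpos_of_nonpos_of_nonneg _ hlog.le
      simpa using hb0 (x, y, z)
    · have hu' : 0 < u (x, z) := lt_of_lt_of_le h (hru x y z)
      have hv' : 0 < v (y, z) := lt_of_lt_of_le h (hrv x y z)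
      have hw' : 0 < w z := lt_of_lt_of_le hu' (huw x z)
      have hbval : b (x, y, z) = u (x, z) * v (y, z) / w z := by
        simp only [hbdef]; rw [if_neg hw'.ne']
      have h5 : 1 - u (x, z) * v (y, z) / (r (x, y, z) * w z)
          ≤ Real.log (r (x, y, z)) + Real.log (w z)
            - Real.log (u (x, z)) - Real.log (v (y, z)) := by
        have hpos : 0 < u (x, z) * v (y, z) / (r (x, y, z) * w z) := by positivity
        have := Real.log_le_sub_one_of_pos hpos
        rw [Real.log_div (mul_pos hu' hv').ne' (mul_pos h hw').ne',
          Real.log_mul hu'.ne' hv'.ne', Real.log_mul h.ne' hw'.ne'] at this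
        linarith
      have h6 : r (x, y, z) - u (x, z) * v (y, z) / w z
          ≤ r (x, y, z) * (Real.log (r (x, y, z)) + Real.log (w z)
            - Real.log (u (x, z)) - Real.log (v (y, z))) := by
        have h7 := mul_le_mul_of_nonneg_left h5 (hr0 (x, y, z))
        have h8 : r (x, y, z) * (1 - u (x, z) * v (y, z) / (r (x, y, z) * w z))
            = r (x, y, z) - u (x, z) * v (y, z) / w z := by
          field_simp
        rw [h8] at h7
        exact h7
      rw [hbval]
      simp only [Real.logb]
      rw [← add_div, ← sub_div, ← sub_div]
      have h9 : r (x, y, z) * ((Real.log (r (x, y, z)) + Real.log (w z)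
            - Real.log (u (x, z)) - Real.log (v (y, z))) / Real.log 2)
          = r (x, y, z) * (Real.log (r (x, y, z)) + Real.log (w z)
            - Real.log (u (x, z)) - Real.log (v (y, z))) / Real.log 2 :=
        (mul_div_assoc _ _ _).symm
      rw [h9]
      exact (div_le_div_iff_of_pos_right hlog).mpr h6
  -- sum of b is at most 1
  have hsumb : ∑ t, b t ≤ 1 := by
    have hb : ∑ t, b t = ∑ z, ∑ x, ∑ y, b (x, y, z) := by
      simp only [Fintype.sum_prod_type]
      have step1 : ∀ x : α, ∑ y : β, ∑ z : γ, b (x, y, z)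
          = ∑ z : γ, ∑ y : β, b (x, y, z) := fun x => Finset.sum_comm
      simp only [step1]
      exact Finset.sum_comm
    rw [hb]
    have hle : ∀ z, ∑ x, ∑ y, b (x, y, z) ≤ w z := by
      intro z
      by_cases hw : w z = 0
      · have hzero : ∀ x : α, ∀ y : β, b (x, y, z) = 0 := by
          intro x y; simp [hbdef, hw]
        simp only [hzero, Finset.sum_const_zero]
        exact hw0 z
      · simp only [hbdef, if_neg hw]
        have inner : ∀ x : α, ∑ y, u (x, z) * v (y, z) / w z
            = u (x, z) * (∑ y, v (y, z)) / w z := by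
          intro x; rw [← Finset.sum_div, ← Finset.mul_sum]
        simp only [inner]
        have outer : ∑ x, u (x, z) * (∑ y, v (y, z)) / w z
            = (∑ x, u (x, z)) * (∑ y, v (y, z)) / w z := by
          rw [← Finset.sum_div, ← Finset.sum_mul]
        rw [outer, ← hz1, ← hz2, mul_div_assoc, div_self hw, mul_one]
    calc ∑ z, ∑ x, ∑ y, b (x, y, z) ≤ ∑ z, w z := Finset.sum_le_sum fun z _ => hle z
      _ = 1 := by rw [hwdef, sum_prob p Z, hsum]
  -- finish
  rw [hcmi]
  calc (0:ℝ) ≤ (1 - ∑ t, b t) / Real.log 2 := div_nonneg (by linarith) hlog.le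
    _ = ∑ t : α × β × γ, (r t - b t) / Real.log 2 := by
        rw [← Finset.sum_div, Finset.sum_sub_distrib, hrsum]
    _ ≤ _ := Finset.sum_le_sum fun t _ => key t

end Helpers

theorem stmt4 {Ω : Type*} [Fintype Ω] {α β γ δ : Type*}
    [Fintype α] [DecidableEq α] [Fintype β] [DecidableEq β]
    [Fintype γ] [DecidableEq γ] [Fintype δ] [DecidableEq δ]
    (p : Ω → ℝ) (hp : ∀ ω, 0 ≤ p ω) (hsum : ∑ ω, p ω = 1)
    (A : Ω → α) (B : Ω → β) (C : Ω → γ) (D : Ω → δ)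
    (h1 : cmi p A D (fun ω => (B ω, C ω)) = 0)
    (h2 : mi p A C ≥ cmi p A C B) :
    mi p A (fun ω => (C ω, D ω)) ≥ cmi p A (fun ω => (C ω, D ω)) B := by
  have aux : 0 ≤ cmi p A D C := cmi_nonneg p hp hsum A D C
  have E1 : ent p (fun ω => (D ω, C ω)) = ent p (fun ω => (C ω, D ω)) :=
    ent_comp p (fun t : γ × δ => (t.2, t.1))
      (fun a b h => by simp [Prod.ext_iff] at h ⊢; tauto) (fun ω => (C ω, D ω))
  have E2 : ent p (fun ω => (A ω, D ω, C ω)) = ent p (fun ω => (A ω, C ω, D ω)) :=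
    ent_comp p (fun t : α × γ × δ => (t.1, t.2.2, t.2.1))
      (fun a b h => by simp [Prod.ext_iff] at h ⊢; tauto) (fun ω => (A ω, C ω, D ω))
  have E3 : ent p (fun ω => (A ω, B ω, C ω)) = ent p (fun ω => (A ω, C ω, B ω)) :=
    ent_comp p (fun t : α × γ × β => (t.1, t.2.2, t.2.1))
      (fun a b h => by simp [Prod.ext_iff] at h ⊢; tauto) (fun ω => (A ω, C ω, B ω))
  have E4 : ent p (fun ω => (D ω, B ω, C ω)) = ent p (fun ω => ((C ω, D ω), B ω)) :=
    ent_comp p (fun t : (γ × δ) × β => (t.1.2, t.2, t.1.1))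
      (fun a b h => by simp [Prod.ext_iff] at h ⊢; tauto) (fun ω => ((C ω, D ω), B ω))
  have E5 : ent p (fun ω => (A ω, D ω, B ω, C ω)) = ent p (fun ω => (A ω, (C ω, D ω), B ω)) :=
    ent_comp p (fun t : α × (γ × δ) × β => (t.1, t.2.1.2, t.2.2, t.2.1.1))
      (fun a b h => by simp [Prod.ext_iff] at h ⊢; tauto) (fun ω => (A ω, (C ω, D ω), B ω))
  have E6 : ent p (fun ω => (B ω, C ω)) = ent p (fun ω => (C ω, B ω)) :=
    ent_comp p (fun t : γ × β => (t.2, t.1))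
      (fun a b h => by simp [Prod.ext_iff] at h ⊢; tauto) (fun ω => (C ω, B ω))
  simp only [mi, cmi] at h1 h2 aux ⊢
  linarith [aux, E1, E2, E3, E4, E5, E6, h1, h2]
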